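/- Let p ∈ (0,1) and let L^1, …, L^n : ℝ^d → ℝ be convex functions that are all differentiable at a point w ∈ ℝ^d, and let f(w) = Q̄_p(L^1(w),…,L^n(w)). Let Q = Q_p(L^1(w),…,L^n(w)), I_> = {i : L^i(w) > Q}, I_= = {i : L^i(w) = Q}, and δ = (n − |I_>|)/n − p. If I_= is a singleton, then f is differentiable at w. Conversely, if δ > 0 and the gradients ∇L^i(w) for i ∈ I_= are not all equal, then f is not differentiable at w. -/

import Mathlib

open Finset MeasureTheory

/-- Empirical `p`-quantile of `u ∈ ℝⁿ`:
`Q_p(u) = inf {t : #{i : u i ≤ t} ≥ p·n}`. -/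
noncomputable def empQuantile {n : ℕ} (p : ℝ) (u : Fin n → ℝ) : ℝ :=
  sInf {t : ℝ | p * n ≤ ((Finset.univ.filter fun i => u i ≤ t).card : ℝ)}

/-- Empirical `p`-superquantile of `u ∈ ℝⁿ`:
`Q̄_p(u) = (1/(1-p)) ∫_p^1 Q_s(u) ds`. -/
noncomputable def supQuantile {n : ℕ} (p : ℝ) (u : Fin n → ℝ) : ℝ :=
  (1 - p)⁻¹ * ∫ s in p..1, empQuantile s u

namespace SQAux
variable {n : ℕ}

/-- count of entries ≤ t -/
noncomputable def cnt (u : Fin n → ℝ) (t : ℝ) : ℕ :=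
  (Finset.univ.filter fun i => u i ≤ t).card

lemma empQuantile_eq_sInf (p : ℝ) (u : Fin n → ℝ) :
    empQuantile p u = sInf {t : ℝ | p * n ≤ (cnt u t : ℝ)} := rfl

lemma cnt_mono (u : Fin n → ℝ) : Monotone (cnt u) := fun a b hab =>
  Finset.card_le_card (Finset.monotone_filter_right _ fun i _ h => le_trans h hab)

lemma cnt_le (u : Fin n → ℝ) (t : ℝ) : cnt u t ≤ n := by
  simpa [cnt] using (Finset.card_filter_le Finset.univ fun i => u i ≤ t)

lemma cnt_bddBelow (hn : 0 < n) (u : Fin n → ℝ) {p : ℝ} (hp : 0 < p) :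
    BddBelow {t : ℝ | p * n ≤ (cnt u t : ℝ)} := by
  refine ⟨(Finset.univ.image u).min' ⟨u ⟨0, hn⟩, Finset.mem_image_of_mem u (mem_univ _)⟩,
    fun t ht => ?_⟩
  have hpos : (0:ℝ) < cnt u t :=
    lt_of_lt_of_le (mul_pos hp (by exact_mod_cast hn)) ht
  have hpos' : 0 < cnt u t := by exact_mod_cast hpos
  obtain ⟨i, hi⟩ := Finset.card_pos.mp hpos'
  have hi' := Finset.mem_filter.mp hi
  exact le_trans (Finset.min'_le _ _ (Finset.mem_image_of_mem u (mem_univ i))) hi'.2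

lemma cnt_nonempty (hn : 0 < n) (u : Fin n → ℝ) {p : ℝ} (hp1 : p ≤ 1) :
    Set.Nonempty {t : ℝ | p * n ≤ (cnt u t : ℝ)} := by
  have hne : (Finset.univ.image u).Nonempty := ⟨u ⟨0, hn⟩, Finset.mem_image_of_mem u (mem_univ _)⟩
  refine ⟨(Finset.univ.image u).max' hne, ?_⟩
  have : cnt u ((Finset.univ.image u).max' hne) = n := by
    have : (Finset.univ.filter fun i => u i ≤ (Finset.univ.image u).max' hne) = Finset.univ := by
      refine Finset.filter_true_of_mem fun i _ => ?_
      exact Finset.le_max' _ _ (Finset.mem_image_of_mem u (mem_univ i))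
    simp [cnt, this]
  rw [Set.mem_setOf_eq, this]
  calc p * n ≤ 1 * n := by
        apply mul_le_mul_of_nonneg_right hp1 (by positivity)
    _ = n := one_mul _

lemma quantile_cnt (hn : 0 < n) (u : Fin n → ℝ) {p : ℝ} (hp : 0 < p) (hp1 : p ≤ 1) :
    p * n ≤ (cnt u (empQuantile p u) : ℝ) := by
  classical
  by_contra hlt
  push_neg at hlt
  set c := empQuantile p u with hc
  set G := (Finset.univ.filter fun i => c < u i) with hG
  set ε : ℝ := if hne : G.Nonempty then (G.image fun i => u i - c).min' (hne.image _) else 1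
    with hε
  have hεpos : 0 < ε := by
    rw [hε]; split_ifs with h
    · rw [Finset.lt_min'_iff]
      intro b hb
      obtain ⟨i, hiG, rfl⟩ := Finset.mem_image.mp hb
      have := (Finset.mem_filter.mp hiG).2
      linarith
    · norm_num
  have hεle : ∀ i, c < u i → ε ≤ u i - c := by
    intro i hi
    have hiG : i ∈ G := Finset.mem_filter.mpr ⟨mem_univ _, hi⟩
    rw [hε]
    split_ifs with h
    · exact Finset.min'_le _ _ (Finset.mem_image_of_mem _ hiG)
    · exact absurd ⟨i, hiG⟩ h
  have hbdd := cnt_bddBelow hn u hp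
  have hSne := cnt_nonempty hn u (p := p) hp1
  have hlt2 : sInf {t : ℝ | p * n ≤ (cnt u t : ℝ)} < c + ε := by
    rw [← empQuantile_eq_sInf, ← hc]; linarith
  obtain ⟨t, htS, htlt⟩ := (csInf_lt_iff hbdd hSne).mp hlt2
  have hct : c ≤ t := by
    have := csInf_le hbdd htS
    rwa [← empQuantile_eq_sInf, ← hc] at this
  have hcnt_eq : cnt u t = cnt u c := by
    unfold cnt
    congr 1
    apply Finset.filter_congr
    intro i _
    constructor
    · intro h
      by_contra hgt
      push_neg at hgt
      have := hεle i hgt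
      linarith
    · intro h; exact le_trans h hct
  rw [Set.mem_setOf_eq, hcnt_eq] at htS
  linarith

lemma cnt_lt_of_lt (hn : 0 < n) (u : Fin n → ℝ) {p : ℝ} (hp : 0 < p) {t : ℝ}
    (ht : t < empQuantile p u) : (cnt u t : ℝ) < p * n := by
  by_contra h
  push_neg at h
  have : empQuantile p u ≤ t := by
    rw [empQuantile_eq_sInf]
    exact csInf_le (cnt_bddBelow hn u hp) h
  linarith

/-- the `(k+1)`-th smallest entry of `u` -/
noncomputable def ordStat (u : Fin n → ℝ) (k : ℕ) : ℝ :=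
  empQuantile (((k : ℝ) + 1) / n) u

lemma ordStat_le_iff (hn : 0 < n) (u : Fin n → ℝ) {k : ℕ} (hk : k < n) (t : ℝ) :
    ordStat u k ≤ t ↔ k + 1 ≤ cnt u t := by
  have hn' : (0:ℝ) < n := by exact_mod_cast hn
  have hp : 0 < ((k : ℝ) + 1) / n := by positivity
  have hp1 : ((k : ℝ) + 1) / n ≤ 1 := by
    rw [div_le_one hn']
    exact_mod_cast Nat.succ_le_of_lt hk
  have hfield : ((k : ℝ) + 1) / n * n = (k : ℝ) + 1 := by field_simp
  unfold ordStat
  constructor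
  · intro h
    have h2 := quantile_cnt hn u hp hp1
    rw [hfield] at h2
    have hmono : (cnt u (empQuantile (((k : ℝ) + 1) / n) u) : ℝ) ≤ (cnt u t : ℝ) := by
      exact_mod_cast cnt_mono u h
    have h3 : ((k : ℝ) + 1) ≤ (cnt u t : ℝ) := le_trans h2 hmono
    exact_mod_cast h3
  · intro h
    apply csInf_le (cnt_bddBelow hn u hp)
    rw [Set.mem_setOf_eq, hfield]
    exact_mod_cast h

lemma quantile_eq_ordStat (hn : 0 < n) (u : Fin n → ℝ) {k : ℕ} (hk : k < n) {s : ℝ}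
    (hs : s ∈ Set.Ioc ((k : ℝ) / n) (((k : ℝ) + 1) / n)) :
    empQuantile s u = ordStat u k := by
  have hn' : (0:ℝ) < n := by exact_mod_cast hn
  have h1 : (k : ℝ) < s * n := by
    have := hs.1
    rw [div_lt_iff₀ hn'] at this
    linarith
  have h2 : s * n ≤ (k : ℝ) + 1 := by
    have := hs.2
    rw [le_div_iff₀ hn'] at this
    linarith
  have hfield : ((k : ℝ) + 1) / n * n = (k : ℝ) + 1 := by field_simp
  unfold ordStat
  rw [empQuantile_eq_sInf, empQuantile_eq_sInf]
  congr 1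
  ext t
  simp only [Set.mem_setOf_eq, hfield]
  constructor
  · intro h
    have hkc : (k : ℝ) < (cnt u t : ℝ) := lt_of_lt_of_le h1 h
    have : k < cnt u t := by exact_mod_cast hkc
    exact_mod_cast Nat.succ_le_of_lt this
  · intro h
    exact le_trans h2 h

/-- multisets with identical CDFs are equal -/
lemma multiset_eq_of_countP (s t : Multiset ℝ)
    (h : ∀ x : ℝ, s.countP (· ≤ x) = t.countP (· ≤ x)) : s = t := by
  classical
  ext a
  have key : ∀ m : Multiset ℝ, m.countP (· ≤ a) = m.countP (· < a) + m.count a := by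
    intro m
    rw [Multiset.count_eq_card_filter_eq, Multiset.countP_eq_card_filter,
      Multiset.countP_eq_card_filter]
    have := Multiset.filter_add_filter (fun x : ℝ => x < a) (fun x : ℝ => a = x) m
    have h1 : Multiset.filter (fun x : ℝ => x < a ∨ a = x) m = Multiset.filter (· ≤ a) m := by
      apply Multiset.filter_congr
      intro x _
      constructor
      · rintro (h' | rfl); exact le_of_lt h'; rfl
      · intro h'; rcases lt_or_eq_of_le h' with h'' | h''
        · exact Or.inl h''
        · exact Or.inr h''.symm
    have h2 : Multiset.filter (fun x : ℝ => x < a ∧ a = x) m = 0 := by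
      rw [Multiset.filter_eq_nil]
      rintro x _ ⟨h1', rfl⟩
      exact lt_irrefl _ h1'
    rw [h1, h2, add_zero] at this
    have := congrArg Multiset.card this
    rw [Multiset.card_add] at this
    omega
  have hlt : s.countP (· < a) = t.countP (· < a) := by
    by_cases H : ((s + t).filter (· < a)).toFinset.Nonempty
    · set b := ((s + t).filter (· < a)).toFinset.max' H with hb
      have hbmem : b ∈ (s + t).filter (· < a) := by
        rw [← Multiset.mem_toFinset]
        exact Finset.max'_mem _ _
      have hba : b < a := (Multiset.mem_filter.mp hbmem).2
      have hle : ∀ x ∈ s + t, x < a → x ≤ b := by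
        intro x hx hxa
        apply Finset.le_max'
        rw [Multiset.mem_toFinset, Multiset.mem_filter]
        exact ⟨hx, hxa⟩
      have e1 : s.countP (· < a) = s.countP (· ≤ b) := by
        apply Multiset.countP_congr rfl
        intro x hx
        simp only [eq_iff_iff]
        exact ⟨fun h' => hle x (Multiset.mem_add.mpr (Or.inl hx)) h',
          fun h' => lt_of_le_of_lt h' hba⟩
      have e2 : t.countP (· < a) = t.countP (· ≤ b) := by
        apply Multiset.countP_congr rfl
        intro x hx
        simp only [eq_iff_iff]
        exact ⟨fun h' => hle x (Multiset.mem_add.mpr (Or.inr hx)) h',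
          fun h' => lt_of_le_of_lt h' hba⟩
      rw [e1, e2, h b]
    · have H' : ∀ x ∈ s + t, ¬ x < a := by
        intro x hx hxa
        exact H ⟨x, by rw [Multiset.mem_toFinset, Multiset.mem_filter]; exact ⟨hx, hxa⟩⟩
      rw [Multiset.countP_eq_zero.mpr (fun x hx => H' x (Multiset.mem_add.mpr (Or.inl hx))),
        Multiset.countP_eq_zero.mpr (fun x hx => H' x (Multiset.mem_add.mpr (Or.inr hx)))]
  have := h a
  rw [key s, key t, hlt] at this
  omega

lemma card_filter_fin_lt (c : ℕ) (hc : c ≤ n) :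
    (Finset.univ.filter fun k : Fin n => (k : ℕ) < c).card = c := by
  conv_rhs => rw [← Finset.card_range c]
  apply Finset.card_bij (fun (k : Fin n) _ => (k : ℕ))
  · intro k hk
    simp only [Finset.mem_filter] at hk
    simpa using hk.2
  · intro k hk k' hk' h
    exact Fin.val_injective h
  · intro j hj
    have hj' : j < n := lt_of_lt_of_le (Finset.mem_range.mp hj) hc
    exact ⟨⟨j, hj'⟩, Finset.mem_filter.mpr ⟨mem_univ _, Finset.mem_range.mp hj⟩, rfl⟩

/-- the order statistics are a rearrangement of `u` -/
lemma sum_g_ordStat (hn : 0 < n) (u : Fin n → ℝ) (g : ℝ → ℝ) :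
    ∑ k : Fin n, g (ordStat u (k : ℕ)) = ∑ i, g (u i) := by
  classical
  have hmult : (Finset.univ.val.map fun k : Fin n => ordStat u (k : ℕ))
      = Finset.univ.val.map u := by
    apply multiset_eq_of_countP
    intro x
    rw [Multiset.countP_map, Multiset.countP_map]
    have h1 : (Multiset.filter (fun k : Fin n => ordStat u (k : ℕ) ≤ x) Finset.univ.val)
        = (Finset.univ.filter fun k : Fin n => ordStat u (k : ℕ) ≤ x).val := rfl
    have h2 : (Multiset.filter (fun i : Fin n => u i ≤ x) Finset.univ.val)
        = (Finset.univ.filter fun i : Fin n => u i ≤ x).val := rfl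
    rw [h1, h2]
    show (Finset.univ.filter fun k : Fin n => ordStat u (k : ℕ) ≤ x).card
      = (Finset.univ.filter fun i : Fin n => u i ≤ x).card
    have h3 : (Finset.univ.filter fun k : Fin n => ordStat u (k : ℕ) ≤ x)
        = (Finset.univ.filter fun k : Fin n => (k : ℕ) < cnt u x) := by
      apply Finset.filter_congr
      intro k _
      rw [ordStat_le_iff hn u k.isLt]
      omega
    rw [h3, card_filter_fin_lt (cnt u x) (cnt_le u x)]
    rfl
  calc ∑ k : Fin n, g (ordStat u (k : ℕ))
      = ((Finset.univ.val.map fun k : Fin n => ordStat u (k : ℕ)).map g).sum := by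
        rw [Multiset.map_map]; rfl
    _ = ((Finset.univ.val.map u).map g).sum := by rw [hmult]
    _ = ∑ i, g (u i) := by rw [Multiset.map_map]; rfl

lemma intervalIntegrable_of_eq_const {F : ℝ → ℝ} {a b c : ℝ} (hab : a ≤ b)
    (h : ∀ s ∈ Set.Ioc a b, F s = c) : IntervalIntegrable F volume a b := by
  rw [intervalIntegrable_iff_integrableOn_Ioc_of_le hab]
  have hc : IntegrableOn (fun _ : ℝ => c) (Set.Ioc a b) volume :=
    integrableOn_const measure_Ioc_lt_top.ne
  exact hc.congr_fun (fun x hx => (h x hx).symm) measurableSet_Ioc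

lemma integral_of_eq_const {F : ℝ → ℝ} {a b c : ℝ} (hab : a ≤ b)
    (h : ∀ s ∈ Set.Ioc a b, F s = c) : ∫ s in a..b, F s = c * (b - a) := by
  rw [intervalIntegral.integral_of_le hab,
    setIntegral_congr_fun measurableSet_Ioc (fun x hx => h x hx),
    setIntegral_const, Real.volume_real_Ioc_of_le hab, smul_eq_mul,
    mul_comm]

/-- Main integral formula. -/
lemma integral_quantile_eq (hn : 0 < n) (u : Fin n → ℝ) {p q : ℝ} (hp : 0 < p)
    (h1 : (n : ℝ) - (Finset.univ.filter fun i => q < u i).card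
        - (Finset.univ.filter fun i => u i = q).card < p * n)
    (h2 : p * n ≤ (n : ℝ) - (Finset.univ.filter fun i => q < u i).card) :
    (∫ s in p..1, empQuantile s u)
      = (n : ℝ)⁻¹ * (∑ i ∈ Finset.univ.filter fun i => q < u i, u i)
        + (((n : ℝ) - (Finset.univ.filter fun i => q < u i).card) / n - p) * q := by
  classical
  have hn' : (0:ℝ) < n := by exact_mod_cast hn
  set A := (Finset.univ.filter fun i => q < u i) with hA
  set m := A.card with hm
  have hmn : m ≤ n := by
    calc m ≤ Finset.univ.card := Finset.card_filter_le _ _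
    _ = n := by simp
  set k0 : ℕ := n - m with hk0
  have hk0' : (k0 : ℝ) = (n : ℝ) - m := by
    rw [hk0]; push_cast [hmn]; ring
  -- cnt at q
  have hcntq : cnt u q = k0 := by
    have := Finset.card_filter_add_card_filter_not (s := Finset.univ)
      (p := fun i => q < u i)
    have he : (Finset.univ.filter fun i => ¬ q < u i) = (Finset.univ.filter fun i => u i ≤ q) := by
      apply Finset.filter_congr; intro i _; simp [not_lt]
    rw [he] at this
    have : m + cnt u q = n := by simpa [cnt, hm, hA] using this
    omega
  -- count below q
  have hcntlt : ((Finset.univ.filter fun i => u i < q).card : ℝ)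
      = (n : ℝ) - m - (Finset.univ.filter fun i => u i = q).card := by
    have hsplit : (Finset.univ.filter fun i => u i ≤ q)
        = (Finset.univ.filter fun i => u i < q) ∪ (Finset.univ.filter fun i => u i = q) := by
      ext i
      simp only [Finset.mem_filter, Finset.mem_union, mem_univ, true_and]
      exact ⟨fun h => lt_or_eq_of_le h, fun h => h.elim le_of_lt le_of_eq⟩
    have hdisj : Disjoint (Finset.univ.filter fun i => u i < q)
        (Finset.univ.filter fun i => u i = q) := by
      rw [Finset.disjoint_filter]
      intro i _ h1' h2'
      rw [h2'] at h1'; exact lt_irrefl _ h1'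
    have hcard : cnt u q = (Finset.univ.filter fun i => u i < q).card
        + (Finset.univ.filter fun i => u i = q).card := by
      rw [cnt, hsplit, Finset.card_union_of_disjoint hdisj]
    rw [hcntq] at hcard
    have : ((k0 : ℝ)) = ((Finset.univ.filter fun i => u i < q).card : ℝ)
        + ((Finset.univ.filter fun i => u i = q).card : ℝ) := by exact_mod_cast hcard
    rw [hk0'] at this
    linarith
  -- p ≤ k0/n
  have hpk0 : p ≤ (k0 : ℝ) / n := by
    rw [le_div_iff₀ hn', hk0']
    linarith
  -- Step A: quantile constant q on Ioc p (k0/n)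
  have stepA : ∀ s ∈ Set.Ioc p ((k0 : ℝ) / n), empQuantile s u = q := by
    intro s hs
    have hsn1 : s * n ≤ (k0 : ℝ) := by
      have h' := hs.2
      rwa [le_div_iff₀ hn'] at h'
    have hsn2 : p * n < s * n := mul_lt_mul_of_pos_right hs.1 hn'
    rw [empQuantile_eq_sInf]
    have hset : {t : ℝ | s * n ≤ (cnt u t : ℝ)} = Set.Ici q := by
      ext t
      simp only [Set.mem_setOf_eq, Set.mem_Ici]
      constructor
      · intro h
        by_contra hlt
        push_neg at hlt
        have hsub : (Finset.univ.filter fun i => u i ≤ t)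
            ⊆ (Finset.univ.filter fun i => u i < q) :=
          Finset.monotone_filter_right _ (fun i _ hi => lt_of_le_of_lt hi hlt)
        have hle : (cnt u t : ℝ) ≤ ((Finset.univ.filter fun i => u i < q).card : ℝ) := by
          exact_mod_cast Finset.card_le_card hsub
        rw [hcntlt] at hle
        linarith
      · intro h
        have h' : cnt u q ≤ cnt u t := cnt_mono u h
        have h'' : (k0 : ℝ) ≤ (cnt u t : ℝ) := by
          rw [← hcntq]; exact_mod_cast h'
        linarith
    rw [hset, csInf_Ici]
  -- piece 1
  have hInt1 : IntervalIntegrable (fun s => empQuantile s u) volume p ((k0 : ℝ) / n) :=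
    intervalIntegrable_of_eq_const hpk0 stepA
  have hVal1 : (∫ s in p..((k0 : ℝ) / n), empQuantile s u) = q * ((k0 : ℝ) / n - p) :=
    integral_of_eq_const hpk0 stepA
  -- pieces k0 ≤ k < n
  have hcast : ∀ k : ℕ, (((k + 1 : ℕ) : ℝ)) / n = ((k : ℝ) + 1) / n := by
    intro k; push_cast; ring
  have hstep : ∀ k : ℕ, k < n →
      ∀ s ∈ Set.Ioc ((k : ℝ) / n) (((k + 1 : ℕ) : ℝ) / n), empQuantile s u = ordStat u k := by
    intro k hk s hs
    rw [hcast k] at hs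
    exact quantile_eq_ordStat hn u hk hs
  have hle_step : ∀ k : ℕ, ((k : ℝ)) / n ≤ (((k + 1 : ℕ) : ℝ)) / n := by
    intro k
    rw [hcast k]
    exact (div_le_div_iff_of_pos_right hn').mpr (by linarith)
  have hIntk : ∀ k ∈ Set.Ico k0 n,
      IntervalIntegrable (fun s => empQuantile s u) volume ((k : ℝ) / n) (((k + 1 : ℕ) : ℝ) / n) := by
    intro k hk
    exact intervalIntegrable_of_eq_const (hle_step k) (hstep k hk.2)
  have hValk : ∀ k ∈ Finset.Ico k0 n,
      (∫ s in ((k : ℝ) / n)..(((k + 1 : ℕ) : ℝ) / n), empQuantile s u)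
        = ordStat u k * (n : ℝ)⁻¹ := by
    intro k hk
    have hk' := Finset.mem_Ico.mp hk
    rw [integral_of_eq_const (hle_step k) (hstep k hk'.2)]
    congr 1
    rw [hcast k]
    field_simp
    ring
  have hk0n : k0 ≤ n := Nat.sub_le _ _
  have hsumInt : ∑ k ∈ Finset.Ico k0 n,
      (∫ s in ((k : ℝ) / n)..(((k + 1 : ℕ) : ℝ) / n), empQuantile s u)
        = ∫ s in ((k0 : ℝ) / n)..(((n : ℕ) : ℝ) / n), empQuantile s u :=
    intervalIntegral.sum_integral_adjacent_intervals_Ico (a := fun k : ℕ => (k : ℝ) / n)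
      hk0n hIntk
  have hnn : (((n : ℕ) : ℝ)) / n = 1 := div_self (ne_of_gt hn')
  rw [hnn] at hsumInt
  have hInt2 : IntervalIntegrable (fun s => empQuantile s u) volume ((k0 : ℝ) / n) 1 := by
    have := IntervalIntegrable.trans_iterate_Ico (a := fun k : ℕ => (k : ℝ) / n)
      (μ := volume) (f := fun s => empQuantile s u) hk0n hIntk
    simpa [hnn] using this
  -- combine
  have hTotal : (∫ s in p..1, empQuantile s u)
      = q * ((k0 : ℝ) / n - p) + ∑ k ∈ Finset.Ico k0 n, ordStat u k * (n : ℝ)⁻¹ := by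
    rw [← intervalIntegral.integral_add_adjacent_intervals hInt1 hInt2, hVal1,
      ← hsumInt, Finset.sum_congr rfl hValk]
  -- identify the sum
  have hord : ∀ k : ℕ, k < n → (q < ordStat u k ↔ k0 ≤ k) := by
    intro k hk
    rw [← not_le, ordStat_le_iff hn u hk, hcntq]
    omega
  have hIco : Finset.Ico k0 n = (Finset.range n).filter fun k => k0 ≤ k := by
    ext k
    simp only [Finset.mem_Ico, Finset.mem_filter, Finset.mem_range]
    omega
  have S1 : ∑ k ∈ Finset.Ico k0 n, ordStat u k = ∑ i ∈ A, u i := by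
    calc ∑ k ∈ Finset.Ico k0 n, ordStat u k
        = ∑ k ∈ Finset.range n, if k0 ≤ k then ordStat u k else 0 := by
          rw [hIco, Finset.sum_filter]
      _ = ∑ k : Fin n, (if k0 ≤ (k : ℕ) then ordStat u (k : ℕ) else 0) :=
          (Fin.sum_univ_eq_sum_range (fun k => if k0 ≤ k then ordStat u k else 0) n).symm
      _ = ∑ k : Fin n, (if q < ordStat u (k : ℕ) then ordStat u (k : ℕ) else 0) :=
          Finset.sum_congr rfl fun k _ =>
            if_congr ((hord (k : ℕ) k.isLt).symm) rfl rfl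
      _ = ∑ i, (if q < u i then u i else 0) :=
          sum_g_ordStat hn u (fun x => if q < x then x else 0)
      _ = ∑ i ∈ A, u i := by rw [hA, Finset.sum_filter]
  rw [hTotal, ← Finset.sum_mul, S1, hk0']
  ring

/-- the key counting bounds at the quantile -/
lemma quantile_counts (hn : 0 < n) (u : Fin n → ℝ) {p : ℝ} (hp : 0 < p) (hp1 : p ≤ 1) :
    p * n ≤ (n : ℝ) - (Finset.univ.filter fun i => empQuantile p u < u i).card ∧
    (n : ℝ) - (Finset.univ.filter fun i => empQuantile p u < u i).card
      - (Finset.univ.filter fun i => u i = empQuantile p u).card < p * n := by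
  classical
  set q := empQuantile p u with hq
  have hcompl : ((Finset.univ.filter fun i => q < u i).card : ℝ) = (n : ℝ) - cnt u q := by
    have := Finset.card_filter_add_card_filter_not (s := Finset.univ)
      (p := fun i => q < u i)
    have he : (Finset.univ.filter fun i => ¬ q < u i)
        = (Finset.univ.filter fun i => u i ≤ q) := by
      apply Finset.filter_congr; intro i _; simp [not_lt]
    rw [he] at this
    have h' : (Finset.univ.filter fun i => q < u i).card + cnt u q = n := by
      simpa [cnt] using this
    have := congrArg (fun x : ℕ => (x : ℝ)) h'
    push_cast at this
    linarith
  constructor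
  · rw [hcompl]
    have := quantile_cnt hn u hp hp1
    linarith
  · -- second bound
    set B := Finset.univ.filter fun i => u i < q with hB
    have hsplit : cnt u q = B.card + (Finset.univ.filter fun i => u i = q).card := by
      have hsp : (Finset.univ.filter fun i => u i ≤ q)
          = B ∪ (Finset.univ.filter fun i => u i = q) := by
        ext i
        simp only [hB, Finset.mem_filter, Finset.mem_union, mem_univ, true_and]
        exact ⟨fun h => lt_or_eq_of_le h, fun h => h.elim le_of_lt le_of_eq⟩
      have hdisj : Disjoint B (Finset.univ.filter fun i => u i = q) := by
        rw [hB, Finset.disjoint_filter]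
        intro i _ h1' h2'
        rw [h2'] at h1'; exact lt_irrefl _ h1'
      rw [cnt, hsp, Finset.card_union_of_disjoint hdisj]
    have hBlt : (B.card : ℝ) < p * n := by
      by_cases hBne : B.Nonempty
      · set t0 := (B.image u).max' (hBne.image u) with ht0
        have ht0q : t0 < q := by
          obtain ⟨i, hiB, hit⟩ := Finset.mem_image.mp ((B.image u).max'_mem (hBne.image u))
          rw [ht0, ← hit]
          exact (Finset.mem_filter.mp hiB).2
        have hcnt_t0 : cnt u t0 = B.card := by
          rw [cnt]
          congr 1
          ext i
          simp only [hB, Finset.mem_filter, mem_univ, true_and]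
          constructor
          · intro h; exact lt_of_le_of_lt h ht0q
          · intro h
            exact Finset.le_max' _ _ (Finset.mem_image_of_mem u
              (Finset.mem_filter.mpr ⟨mem_univ _, h⟩))
        have := cnt_lt_of_lt hn u hp (t := t0) ht0q
        rw [hcnt_t0] at this
        exact this
      · have : B.card = 0 := by
          rw [Finset.card_eq_zero]
          exact Finset.not_nonempty_iff_eq_empty.mp hBne
        rw [this]
        push_cast
        positivity
    rw [hcompl]
    have hc := congrArg (fun x : ℕ => (x : ℝ)) hsplit
    push_cast at hc
    linarith
/-- lower bound: any feasible weighted sum is below the integral -/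
lemma weighted_sum_le_integral (hn : 0 < n) (u : Fin n → ℝ) {p : ℝ} (hp : 0 < p) (hp1 : p < 1)
    (lam : Fin n → ℝ) (h0 : ∀ i, 0 ≤ lam i) (h1n : ∀ i, lam i ≤ (n : ℝ)⁻¹)
    (hsum : ∑ i, lam i = 1 - p) :
    ∑ i, lam i * u i ≤ ∫ s in p..1, empQuantile s u := by
  classical
  have hn' : (0:ℝ) < n := by exact_mod_cast hn
  set q := empQuantile p u with hq
  obtain ⟨hb1, hb2⟩ := quantile_counts hn u hp hp1.le
  rw [integral_quantile_eq hn u hp hb2 hb1]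
  set A := Finset.univ.filter fun i => q < u i with hA
  set m := A.card with hm
  have hkey : ∀ i, lam i * u i ≤ lam i * q + (if q < u i then (n : ℝ)⁻¹ * (u i - q) else 0) := by
    intro i
    by_cases h : q < u i
    · rw [if_pos h]
      have : lam i * (u i - q) ≤ (n : ℝ)⁻¹ * (u i - q) :=
        mul_le_mul_of_nonneg_right (h1n i) (by linarith)
      nlinarith
    · rw [if_neg h]
      push_neg at h
      nlinarith [h0 i, h]
  calc ∑ i, lam i * u i
      ≤ ∑ i, (lam i * q + (if q < u i then (n : ℝ)⁻¹ * (u i - q) else 0)) :=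
        Finset.sum_le_sum fun i _ => hkey i
    _ = (1 - p) * q + ∑ i ∈ A, (n : ℝ)⁻¹ * (u i - q) := by
        rw [Finset.sum_add_distrib, ← Finset.sum_mul, hsum, hA, Finset.sum_filter]
    _ = (1 - p) * q + (n : ℝ)⁻¹ * (∑ i ∈ A, u i) - (n : ℝ)⁻¹ * m * q := by
        rw [← Finset.mul_sum, Finset.sum_sub_distrib, Finset.sum_const, hm, nsmul_eq_mul]
        ring
    _ = (n : ℝ)⁻¹ * (∑ i ∈ A, u i) + (((n : ℝ) - m) / n - p) * q := by
        field_simp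
        ring


end SQAux

/-- Differentiability of the superquantile objective: if `I_=` is a singleton
then `f(w) = Q̄_p(L(w))` is differentiable at `w`; conversely if `δ > 0` and the
gradients `∇L^i(w)`, `i ∈ I_=`, are not all equal, then `f` is not
differentiable at `w`. -/
theorem stmt6 {n d : ℕ} (hn : 1 ≤ n) (p : ℝ) (hp0 : 0 < p) (hp1 : p < 1)
    (L : Fin n → EuclideanSpace ℝ (Fin d) → ℝ) (hL : ∀ i, ConvexOn ℝ Set.univ (L i))
    (w : EuclideanSpace ℝ (Fin d)) (hdiff : ∀ i, DifferentiableAt ℝ (L i) w) :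
    let Q := empQuantile p (fun i => L i w)
    let Igt := Finset.univ.filter fun i => Q < L i w
    let Ieq := Finset.univ.filter fun i => L i w = Q
    let δ : ℝ := ((n : ℝ) - (Igt.card : ℝ)) / n - p
    let f := fun w' => supQuantile p (fun i => L i w')
    (Ieq.card = 1 → DifferentiableAt ℝ f w) ∧
    (0 < δ → ¬ (∀ i ∈ Ieq, ∀ j ∈ Ieq, gradient (L i) w = gradient (L j) w) →
      ¬ DifferentiableAt ℝ f w) := by
  classical
  intro Q Igt Ieq δ f
  have hn0 : 0 < n := hn
  have hn' : (0:ℝ) < n := by exact_mod_cast hn0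
  obtain ⟨hb1', hb2'⟩ := SQAux.quantile_counts hn0 (fun i => L i w) hp0 hp1.le
  have hb1 : p * n ≤ (n : ℝ) - Igt.card := hb1'
  have hb2 : (n : ℝ) - Igt.card - Ieq.card < p * n := hb2'
  clear hb1' hb2'
  constructor
  · -- Part 1
    intro hcard
    obtain ⟨i0, hIeq1⟩ := Finset.card_eq_one.mp hcard
    have hi0mem : i0 ∈ Ieq := hIeq1 ▸ Finset.mem_singleton_self i0
    have hi0 : L i0 w = Q := (Finset.mem_filter.mp hi0mem).2
    rw [hcard] at hb2
    -- eventual ordering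
    have hev : ∀ᶠ w' in nhds w, ∀ i,
        (i ∈ Igt → L i0 w' < L i w') ∧ (i ∉ Igt → i ≠ i0 → L i w' < L i0 w') := by
      rw [Filter.eventually_all]
      intro i
      by_cases hiI : i ∈ Igt
      · have hlt : L i0 w < L i w := by
          rw [hi0]; exact (Finset.mem_filter.mp hiI).2
        filter_upwards [ContinuousAt.eventually_lt (hdiff i0).continuousAt
          (hdiff i).continuousAt hlt] with w' hw'
        exact ⟨fun _ => hw', fun h _ => (h hiI).elim⟩
      · rcases eq_or_ne i i0 with rfl | hne
        · exact Filter.Eventually.of_forall fun w' =>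
            ⟨fun h => (hiI h).elim, fun _ h' => (h' rfl).elim⟩
        · have hle : L i w ≤ Q := by
            by_contra h
            push_neg at h
            exact hiI (Finset.mem_filter.mpr ⟨mem_univ _, h⟩)
          have hlt : L i w < Q := by
            rcases lt_or_eq_of_le hle with h | h
            · exact h
            · exfalso
              have : i ∈ Ieq := Finset.mem_filter.mpr ⟨mem_univ _, h⟩
              rw [hIeq1, Finset.mem_singleton] at this
              exact hne this
          have hlt' : L i w < L i0 w := by rw [hi0]; exact hlt
          filter_upwards [ContinuousAt.eventually_lt (hdiff i).continuousAt
            (hdiff i0).continuousAt hlt'] with w' hw'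
          exact ⟨fun h => (hiI h).elim, fun _ _ => hw'⟩
    set c1 : ℝ := ((n : ℝ) - Igt.card) / n - p with hc1
    have hg : DifferentiableAt ℝ
        (fun w' => (1 - p)⁻¹ * ((n:ℝ)⁻¹ * (∑ i ∈ Igt, L i w') + c1 * L i0 w')) w := by
      apply DifferentiableAt.const_mul
      exact ((DifferentiableAt.fun_sum fun i _ => hdiff i).const_mul _).add
        ((hdiff i0).const_mul _)
    refine (Filter.EventuallyEq.differentiableAt_iff ?_).mpr hg
    filter_upwards [hev] with w' hw'
    show supQuantile p (fun i => L i w')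
      = (1 - p)⁻¹ * ((n:ℝ)⁻¹ * (∑ i ∈ Igt, L i w') + c1 * L i0 w')
    have hAeq : (Finset.univ.filter fun i => L i0 w' < L i w') = Igt := by
      ext i
      simp only [Finset.mem_filter, mem_univ, true_and]
      constructor
      · intro h
        by_contra hni
        rcases eq_or_ne i i0 with rfl | hne
        · exact lt_irrefl _ h
        · exact absurd h (not_lt.mpr (le_of_lt ((hw' i).2 hni hne)))
      · intro h; exact (hw' i).1 h
    have hEeq : (Finset.univ.filter fun i => L i w' = L i0 w') = {i0} := by
      ext i
      simp only [Finset.mem_filter, mem_univ, true_and, Finset.mem_singleton]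
      constructor
      · intro h
        by_contra hne
        by_cases hiI : i ∈ Igt
        · have := (hw' i).1 hiI
          rw [h] at this
          exact lt_irrefl _ this
        · have := (hw' i).2 hiI hne
          rw [h] at this
          exact lt_irrefl _ this
      · rintro rfl; rfl
    have h1x : (n:ℝ) - ((Finset.univ.filter fun i => L i0 w' < (fun i => L i w') i).card : ℝ)
        - ((Finset.univ.filter fun i => (fun i => L i w') i = L i0 w').card : ℝ) < p * n := by
      rw [show (Finset.univ.filter fun i => L i0 w' < (fun i => L i w') i) = Igt from hAeq,
        show (Finset.univ.filter fun i => (fun i => L i w') i = L i0 w') = {i0} from hEeq,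
        Finset.card_singleton]
      push_cast
      push_cast at hb2
      exact hb2
    have h2x : p * n ≤ (n:ℝ)
        - ((Finset.univ.filter fun i => L i0 w' < (fun i => L i w') i).card : ℝ) := by
      rw [show (Finset.univ.filter fun i => L i0 w' < (fun i => L i w') i) = Igt from hAeq]
      exact hb1
    have hval := SQAux.integral_quantile_eq hn0 (fun i => L i w') (q := L i0 w') hp0 h1x h2x
    rw [show (Finset.univ.filter fun i => L i0 w' < (fun i => L i w') i) = Igt from hAeq] at hval
    show (1 - p)⁻¹ * (∫ s in p..1, empQuantile s fun i => L i w')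
      = (1 - p)⁻¹ * ((n:ℝ)⁻¹ * (∑ i ∈ Igt, L i w') + c1 * L i0 w')
    rw [hval, hc1]
  · -- Part 2
    intro hδ hgrad hf
    push_neg at hgrad
    obtain ⟨i, hi, j, hj, hij⟩ := hgrad
    have hQi : L i w = Q := (Finset.mem_filter.mp hi).2
    have hQj : L j w = Q := (Finset.mem_filter.mp hj).2
    have hne : i ≠ j := fun h => hij (h ▸ rfl)
    have hfij : fderiv ℝ (L i) w ≠ fderiv ℝ (L j) w := by
      intro h
      apply hij
      unfold gradient
      rw [h]
    set m := Igt.card with hm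
    set e := Ieq.card with he
    have he0 : 0 < e := Finset.card_pos.mpr ⟨i, hi⟩
    have he' : (0:ℝ) < e := by exact_mod_cast he0
    have hδdef : δ = ((n:ℝ) - m)/n - p := rfl
    have hδe : δ < (e : ℝ)/n := by
      have h' : ((n:ℝ) - m - e)/n < p := by
        rw [div_lt_iff₀ hn']
        linarith
      have h'' : ((n:ℝ)-m)/n - (e:ℝ)/n = ((n:ℝ)-m-e)/n := by ring
      rw [hδdef]
      linarith
    set μ : ℝ := δ / e with hμ
    have hμ0 : 0 < μ := div_pos hδ he'
    have hμn : μ < (n:ℝ)⁻¹ := by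
      rw [hμ, div_lt_iff₀ he']
      have : (e:ℝ)/n = (n:ℝ)⁻¹ * e := by ring
      linarith
    have heμ : (e : ℝ) * μ = δ := by
      rw [hμ, mul_comm]
      exact div_mul_cancel₀ δ (ne_of_gt he')
    set ε : ℝ := min μ ((n:ℝ)⁻¹ - μ) / 2 with hε
    have hε0 : 0 < ε := div_pos (lt_min hμ0 (by linarith)) two_pos
    have hεa : ε ≤ μ / 2 := by
      rw [hε]
      have := min_le_left μ ((n:ℝ)⁻¹ - μ)
      linarith
    have hεb : ε ≤ ((n:ℝ)⁻¹ - μ) / 2 := by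
      rw [hε]
      have := min_le_right μ ((n:ℝ)⁻¹ - μ)
      linarith
    set lam : ℝ → Fin n → ℝ := fun c i' =>
      (if i' ∈ Igt then (n:ℝ)⁻¹ else 0) + (if i' ∈ Ieq then μ else 0)
        + (if i' = i then c else 0) + (if i' = j then -c else 0) with hlam
    clear_value δ μ ε
    have hIgtIeq : ∀ i', i' ∈ Igt → i' ∉ Ieq := by
      intro i' h1 h2
      have e1 := (Finset.mem_filter.mp h1).2
      have e2 := (Finset.mem_filter.mp h2).2
      rw [e2] at e1
      exact lt_irrefl _ e1
    have hiIgt : i ∉ Igt := fun h => hIgtIeq i h hi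
    have hjIgt : j ∉ Igt := fun h => hIgtIeq j h hj
    -- feasibility
    have hfeas : ∀ c : ℝ, -ε ≤ c → c ≤ ε →
        (∀ i', 0 ≤ lam c i') ∧ (∀ i', lam c i' ≤ (n:ℝ)⁻¹) := by
      intro c hc1 hc2
      have key : ∀ i', 0 ≤ lam c i' ∧ lam c i' ≤ (n:ℝ)⁻¹ := by
        intro i'
        simp only [hlam]
        by_cases h1 : i' ∈ Igt
        · have h2 : i' ∉ Ieq := hIgtIeq i' h1
          have h3 : i' ≠ i := fun h => hiIgt (h ▸ h1)
          have h4 : i' ≠ j := fun h => hjIgt (h ▸ h1)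
          rw [if_pos h1, if_neg h2, if_neg h3, if_neg h4]
          constructor <;> [positivity; linarith]
        · by_cases h2 : i' ∈ Ieq
          · rw [if_neg h1, if_pos h2]
            by_cases h3 : i' = i
            · have h4 : i' ≠ j := fun h => hne (h3 ▸ h)
              rw [if_pos h3, if_neg h4]
              constructor <;> linarith
            · by_cases h4 : i' = j
              · rw [if_neg h3, if_pos h4]
                constructor <;> linarith
              · rw [if_neg h3, if_neg h4]
                constructor <;> linarith
          · have h3 : i' ≠ i := fun h => h2 (h ▸ hi)
            have h4 : i' ≠ j := fun h => h2 (h ▸ hj)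
            rw [if_neg h1, if_neg h2, if_neg h3, if_neg h4]
            norm_num
      exact ⟨fun i' => (key i').1, fun i' => (key i').2⟩
    -- sum of weights
    have hsum_lam : ∀ c : ℝ, ∑ i', lam c i' = 1 - p := by
      intro c
      simp only [hlam]
      rw [Finset.sum_add_distrib, Finset.sum_add_distrib, Finset.sum_add_distrib,
        Finset.sum_ite_mem, Finset.sum_ite_mem, Finset.univ_inter, Finset.univ_inter,
        Finset.sum_const, Finset.sum_const,
        Finset.sum_ite_eq' Finset.univ i (fun _ => c),
        Finset.sum_ite_eq' Finset.univ j (fun _ => -c)]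
      simp only [Finset.mem_univ, if_true, nsmul_eq_mul, ← hm, ← he]
      have : (m:ℝ) * (n:ℝ)⁻¹ + (e:ℝ) * μ = 1 - p := by
        rw [heμ, hδdef]
        have hmn : (m : ℝ) ≤ n := by
          have h' : m ≤ n := by
            rw [hm]
            simpa using Finset.card_le_univ Igt
          exact_mod_cast h'
        field_simp
        ring
      linarith
    -- value of the integral at w
    have hvalw := SQAux.integral_quantile_eq hn0 (fun i' => L i' w) (q := Q) hp0 hb2 hb1
    rw [show (Finset.univ.filter fun i' => Q < (fun i' => L i' w) i') = Igt from rfl] at hvalw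
    have hfw : f w = (1-p)⁻¹ * ((n:ℝ)⁻¹ * (∑ i' ∈ Igt, L i' w) + δ * Q) := by
      show (1-p)⁻¹ * (∫ s in p..1, empQuantile s fun i' => L i' w) = _
      rw [hvalw, hδdef]
    -- weighted sum at w
    have h_eqsum : ∀ c : ℝ, ∑ i', lam c i' * L i' w
        = (n:ℝ)⁻¹ * (∑ i' ∈ Igt, L i' w) + δ * Q := by
      intro c
      simp only [hlam, add_mul, ite_mul, zero_mul, neg_mul]
      rw [Finset.sum_add_distrib, Finset.sum_add_distrib, Finset.sum_add_distrib]
      have s1 : ∑ i', (if i' ∈ Igt then (n:ℝ)⁻¹ * L i' w else 0)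
          = (n:ℝ)⁻¹ * ∑ i' ∈ Igt, L i' w := by
        rw [Finset.sum_ite_mem, Finset.univ_inter, Finset.mul_sum]
      have s2 : ∑ i', (if i' ∈ Ieq then μ * L i' w else 0) = δ * Q := by
        rw [Finset.sum_ite_mem, Finset.univ_inter]
        have hcst : ∀ i' ∈ Ieq, μ * L i' w = μ * Q := fun i' h => by
          rw [(Finset.mem_filter.mp h).2]
        rw [Finset.sum_congr rfl hcst, Finset.sum_const, nsmul_eq_mul, ← he, ← heμ]
        ring
      have s3 : ∑ i', (if i' = i then c * L i' w else 0) = c * Q := by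
        rw [Finset.sum_ite_eq' Finset.univ i (fun i' => c * L i' w)]
        simp [hQi]
      have s4 : ∑ i', (if i' = j then -(c * L i' w) else 0) = -(c * Q) := by
        rw [Finset.sum_ite_eq' Finset.univ j (fun i' => -(c * L i' w))]
        simp [hQj]
      rw [s1, s2, s3, s4]
      ring
    -- lower bound
    have h_le : ∀ c : ℝ, -ε ≤ c → c ≤ ε → ∀ w'',
        (1-p)⁻¹ * ∑ i', lam c i' * L i' w'' ≤ f w'' := by
      intro c hc1 hc2 w''
      obtain ⟨g0, g1⟩ := hfeas c hc1 hc2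
      have hineq := SQAux.weighted_sum_le_integral hn0 (fun i' => L i' w'') hp0 hp1
        (lam c) g0 g1 (hsum_lam c)
      have h1p : (0:ℝ) ≤ (1-p)⁻¹ := inv_nonneg.mpr (by linarith)
      exact mul_le_mul_of_nonneg_left hineq h1p
    have hdiffh : ∀ c : ℝ, DifferentiableAt ℝ
        (fun w'' => (1-p)⁻¹ * ∑ i', lam c i' * L i' w'') w := fun c =>
      (DifferentiableAt.fun_sum fun i' _ => (hdiff i').const_mul (lam c i')).const_mul _
    have hfd : ∀ c : ℝ, -ε ≤ c → c ≤ ε → fderiv ℝ f w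
        = fderiv ℝ (fun w'' => (1-p)⁻¹ * ∑ i', lam c i' * L i' w'') w := by
      intro c hc1 hc2
      have hmin : IsLocalMin (fun w'' => f w'' - (1-p)⁻¹ * ∑ i', lam c i' * L i' w'') w := by
        apply Filter.Eventually.of_forall
        intro w''
        have e1 := h_le c hc1 hc2 w''
        have e2 : (1-p)⁻¹ * ∑ i', lam c i' * L i' w = f w := by
          rw [h_eqsum c]
          exact hfw.symm
        show f w - _ ≤ f w'' - _
        linarith
      have h0 := hmin.fderiv_eq_zero
      rw [fderiv_fun_sub hf (hdiffh c)] at h0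
      exact sub_eq_zero.mp h0
    have E1 := hfd ε (by linarith) le_rfl
    have E2 := hfd (-ε) le_rfl (by linarith)
    have hEE : fderiv ℝ (fun w'' => (1-p)⁻¹ * ∑ i', lam ε i' * L i' w'') w
        = fderiv ℝ (fun w'' => (1-p)⁻¹ * ∑ i', lam (-ε) i' * L i' w'') w :=
      E1.symm.trans E2
    have hfun : (fun w'' => (1-p)⁻¹ * ∑ i', lam ε i' * L i' w''
          - (1-p)⁻¹ * ∑ i', lam (-ε) i' * L i' w'')
        = fun w'' => ((1-p)⁻¹ * (2*ε)) * (L i w'' - L j w'') := by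
      funext w''
      have hpt : ∀ i', lam ε i' * L i' w'' - lam (-ε) i' * L i' w''
          = (if i' = i then 2*ε*L i' w'' else 0) + (if i' = j then -(2*ε*L i' w'') else 0) := by
        intro i'
        simp only [hlam]
        by_cases h3 : i' = i
        · have h4 : i' ≠ j := fun h => hne (h3.symm.trans h)
          rw [if_pos h3, if_pos h3, if_pos h3, if_neg h4, if_neg h4, if_neg h4]
          ring
        · by_cases h4 : i' = j
          · rw [if_neg h3, if_neg h3, if_neg h3, if_pos h4, if_pos h4, if_pos h4]
            ring
          · rw [if_neg h3, if_neg h3, if_neg h3, if_neg h4, if_neg h4, if_neg h4]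
            ring
      rw [← mul_sub, ← Finset.sum_sub_distrib,
        Finset.sum_congr rfl (fun i' _ => hpt i'), Finset.sum_add_distrib,
        Finset.sum_ite_eq' Finset.univ i (fun i' => 2*ε*L i' w''),
        Finset.sum_ite_eq' Finset.univ j (fun i' => -(2*ε*L i' w''))]
      simp only [Finset.mem_univ, if_true]
      ring
    have hD0 : fderiv ℝ (fun w'' => ((1-p)⁻¹ * (2*ε)) * (L i w'' - L j w'')) w = 0 := by
      rw [← hfun, fderiv_fun_sub (hdiffh ε) (hdiffh (-ε)), hEE, sub_self]
    have hD1 : fderiv ℝ (fun w'' => ((1-p)⁻¹ * (2*ε)) * (L i w'' - L j w'')) w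
        = ((1-p)⁻¹ * (2*ε)) • (fderiv ℝ (L i) w - fderiv ℝ (L j) w) := by
      rw [fderiv_const_mul (a := fun y => L i y - L j y) ((hdiff i).sub (hdiff j)) _,
        fderiv_fun_sub (hdiff i) (hdiff j)]
    rw [hD1] at hD0
    rcases smul_eq_zero.mp hD0 with h | h
    · have h1p : (0:ℝ) < 1 - p := by linarith
      have : (0:ℝ) < (1-p)⁻¹ * (2*ε) := by positivity
      rw [h] at this
      exact lt_irrefl _ this
    · exact hfij (sub_eq_zero.mp h)
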